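/- arXiv:1704.04652 — 2 statements merged into one kernel-verified Lean document; each statement's English description precedes it below -/
import Mathlib

section
/- Let fᵢ : ℝ^m → ℝ (i = 1, …, N) be differentiable strictly convex functions and L the Laplacian of a connected weighted undirected graph. Any equilibrium point (z*, λ*) of the primal-dual dynamics ż = -∇f(z) - (L ⊗ I_m)λ, λ̇ = (L ⊗ I_m)z (where z = col(z₁,…,z_N) and ∇f(z) = col(∇f₁(z₁),…,∇f_N(z_N))) satisfies z₁* = ⋯ = z_N* = θ with Σᵢ₌₁ᴺ ∇fᵢ(θ) = 0; that is, θ is an optimal solution of min_y Σᵢ fᵢ(y). -/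
open Finset Matrix

/-- The simple graph on `Fin N` whose edges are the pairs with positive weight. -/
def weightGraph {N : ℕ} (A : Matrix (Fin N) (Fin N) ℝ)
    (hsymm : ∀ i j, A i j = A j i) : SimpleGraph (Fin N) where
  Adj i j := i ≠ j ∧ 0 < A i j
  symm := ⟨fun i j h => ⟨h.1.symm, (hsymm i j) ▸ h.2⟩⟩
  loopless := ⟨fun i h => h.1 rfl⟩

section aux

variable {E : Type*} [NormedAddCommGroup E] [InnerProductSpace ℝ E] [CompleteSpace E]

/-- First-order optimality: a convex differentiable function with zero gradient at `θ`
attains its minimum at `θ`. -/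
lemma convex_min_of_gradient_eq_zero (g : E → ℝ) (hc : ConvexOn ℝ Set.univ g)
    (hd : Differentiable ℝ g) (θ : E) (h0 : gradient g θ = 0) (y : E) : g θ ≤ g y := by
  have hfd : fderiv ℝ g θ = 0 := by
    have := congrArg (InnerProductSpace.toDual ℝ E) h0
    simpa [gradient] using this
  set ψ : ℝ → ℝ := fun t => g (AffineMap.lineMap θ y t) with hψ
  have hψc : ConvexOn ℝ Set.univ ψ := by
    have := hc.comp_affineMap (AffineMap.lineMap θ y)
    exact this
  have hline : HasDerivAt (fun t : ℝ => AffineMap.lineMap θ y t) (y - θ) 0 := by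
    simp only [AffineMap.lineMap_apply_module]
    have h1 : HasDerivAt (fun t : ℝ => (1 - t) • θ + t • y) ((-1 : ℝ) • θ + (1 : ℝ) • y) 0 := by
      exact (((hasDerivAt_id (0:ℝ)).const_sub 1).smul_const θ).add
        ((hasDerivAt_id (0:ℝ)).smul_const y)
    convert h1 using 1
    simp [sub_eq_add_neg, add_comm]
  have hψd : HasDerivAt ψ 0 0 := by
    have := (hd _).hasFDerivAt.comp_hasDerivAt 0 hline
    simpa [hfd, Function.comp_def] using this
  have hslope : (0 : ℝ) ≤ slope ψ 0 1 := by
    have := hψc.le_slope_of_hasDerivWithinAt_Ioi (Set.mem_univ 0) (Set.mem_univ 1)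
      one_pos (hψd.hasDerivWithinAt)
    exact this
  have : slope ψ 0 1 = g y - g θ := by
    simp [slope_def_field, hψ, AffineMap.lineMap_apply_module]
  linarith [hslope, this ▸ hslope]

end aux

/-- Any equilibrium point `(z*, λ*)` of the primal-dual dynamics
`ż = -∇f(z) - (L ⊗ I_m)λ`, `λ̇ = (L ⊗ I_m)z` with `L` the Laplacian of a connected
weighted undirected graph and each `fᵢ` differentiable and strictly convex satisfies
`z₁* = ⋯ = z_N* = θ` with `∑ᵢ ∇fᵢ(θ) = 0`, i.e. `θ` minimizes `∑ᵢ fᵢ`. -/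
theorem stmt8 {N m : ℕ}
    (A L : Matrix (Fin N) (Fin N) ℝ)
    (hAdiag : ∀ i, A i i = 0)
    (hAsymm : ∀ i j, A i j = A j i)
    (hAnonneg : ∀ i j, 0 ≤ A i j)
    (hLdiag : ∀ i, L i i = ∑ j ∈ univ.erase i, A i j)
    (hLoff : ∀ i j, i ≠ j → L i j = -A i j)
    (hconn : (weightGraph A hAsymm).Connected)
    (f : Fin N → EuclideanSpace ℝ (Fin m) → ℝ)
    (hdiff : ∀ i, Differentiable ℝ (f i))
    (hstrict : ∀ i, StrictConvexOn ℝ Set.univ (f i))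
    (zstar lamstar : Fin N → EuclideanSpace ℝ (Fin m))
    (heq₁ : ∀ i, -gradient (f i) (zstar i) - ∑ j, L i j • lamstar j = 0)
    (heq₂ : ∀ i, (∑ j, L i j • zstar j) = (0 : EuclideanSpace ℝ (Fin m))) :
    ∃ θ : EuclideanSpace ℝ (Fin m), (∀ i, zstar i = θ) ∧
      (∑ i, gradient (f i) θ) = 0 ∧
      ∀ y : EuclideanSpace ℝ (Fin m), (∑ i, f i θ) ≤ ∑ i, f i y := by
  set z := zstar with hz
  -- quadratic form identity
  have hS : ∑ i, ∑ j, L i j * (inner ℝ (z i) (z j) : ℝ) = 0 := by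
    refine Finset.sum_eq_zero fun i _ => ?_
    have : (inner ℝ (z i) (∑ j, L i j • z j) : ℝ) = ∑ j, L i j * inner ℝ (z i) (z j) := by
      rw [inner_sum]
      exact Finset.sum_congr rfl fun j _ => real_inner_smul_right _ _ _
    rw [← this, heq₂ i, inner_zero_right]
  have hT1 : ∀ i, ∑ j, L i j * (inner ℝ (z i) (z j) : ℝ)
      = (∑ j, A i j * ‖z i‖ ^ 2) - ∑ j, A i j * inner ℝ (z i) (z j) := by
    intro i
    have hsplit : ∑ j, L i j * (inner ℝ (z i) (z j) : ℝ)
        = L i i * inner ℝ (z i) (z i) + ∑ j ∈ univ.erase i, L i j * inner ℝ (z i) (z j) :=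
      (Finset.add_sum_erase univ _ (mem_univ i)).symm
    have h1 : L i i * (inner ℝ (z i) (z i) : ℝ) = ∑ j, A i j * ‖z i‖ ^ 2 := by
      rw [hLdiag i, real_inner_self_eq_norm_sq, Finset.sum_mul]
      rw [← Finset.add_sum_erase univ (fun j => A i j * ‖z i‖ ^ 2) (mem_univ i), hAdiag i]
      ring_nf
      exact Finset.sum_congr rfl fun j _ => mul_comm _ _
    have h2 : ∑ j ∈ univ.erase i, L i j * (inner ℝ (z i) (z j) : ℝ)
        = -∑ j, A i j * inner ℝ (z i) (z j) := by
      rw [← Finset.add_sum_erase univ (fun j => A i j * (inner ℝ (z i) (z j):ℝ)) (mem_univ i),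
        hAdiag i]
      rw [Finset.sum_congr rfl fun j hj => by
        rw [hLoff i j (Finset.ne_of_mem_erase hj).symm]]
      simp [Finset.sum_neg_distrib]
    rw [hsplit, h1, h2]; ring
  -- each A i j * ‖z i - z j‖² = 0
  have hQ : ∑ i, ∑ j, A i j * ‖z i - z j‖ ^ 2 = 0 := by
    have hexp : ∀ i j, A i j * ‖z i - z j‖ ^ 2
        = A i j * ‖z i‖ ^ 2 - 2 * (A i j * inner ℝ (z i) (z j)) + A i j * ‖z j‖ ^ 2 := by
      intro i j
      rw [@norm_sub_sq_real (EuclideanSpace ℝ (Fin m)) _ _ (z i) (z j)]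
      ring
    have hsymm2 : ∑ i, ∑ j, A i j * ‖z j‖ ^ 2 = ∑ i, ∑ j, A i j * ‖z i‖ ^ 2 := by
      rw [Finset.sum_comm]
      exact Finset.sum_congr rfl fun i _ => Finset.sum_congr rfl fun j _ => by rw [hAsymm]
    calc ∑ i, ∑ j, A i j * ‖z i - z j‖ ^ 2
        = ∑ i, ∑ j, (A i j * ‖z i‖ ^ 2 - 2 * (A i j * inner ℝ (z i) (z j)) + A i j * ‖z j‖ ^ 2) := by
          exact Finset.sum_congr rfl fun i _ => Finset.sum_congr rfl fun j _ => hexp i j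
      _ = (∑ i, ∑ j, A i j * ‖z i‖ ^ 2) - 2 * (∑ i, ∑ j, A i j * (inner ℝ (z i) (z j):ℝ))
            + ∑ i, ∑ j, A i j * ‖z j‖ ^ 2 := by
          simp [Finset.sum_add_distrib, Finset.sum_sub_distrib, Finset.mul_sum]
      _ = 2 * ((∑ i, ∑ j, A i j * ‖z i‖ ^ 2) - ∑ i, ∑ j, A i j * (inner ℝ (z i) (z j):ℝ)) := by
          rw [hsymm2]; ring
      _ = 2 * (∑ i, ∑ j, L i j * (inner ℝ (z i) (z j):ℝ)) := by
          rw [← Finset.sum_sub_distrib]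
          congr 1
          exact (Finset.sum_congr rfl fun i _ => (hT1 i).symm)
      _ = 0 := by rw [hS]; ring
  have hkey : ∀ i j, 0 < A i j → z i = z j := by
    intro i j hA
    have hnn : ∀ i ∈ (univ : Finset (Fin N)), 0 ≤ ∑ j, A i j * ‖z i - z j‖ ^ 2 := by
      intro i _
      exact Finset.sum_nonneg fun j _ => mul_nonneg (hAnonneg i j) (sq_nonneg _)
    have h1 := (Finset.sum_eq_zero_iff_of_nonneg hnn).mp hQ i (mem_univ i)
    have h2 := (Finset.sum_eq_zero_iff_of_nonneg
      (fun j _ => mul_nonneg (hAnonneg i j) (sq_nonneg _))).mp h1 j (mem_univ j)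
    have : ‖z i - z j‖ ^ 2 = 0 := by
      rcases mul_eq_zero.mp h2 with h | h
      · exact absurd h (ne_of_gt hA)
      · exact h
    have := pow_eq_zero_iff (n := 2) (by norm_num) |>.mp this
    rw [norm_eq_zero] at this
    exact sub_eq_zero.mp this
  -- connectivity: all z i equal
  obtain ⟨i₀⟩ := hconn.nonempty
  have hall : ∀ i, z i = z i₀ := by
    intro i
    obtain ⟨w⟩ := hconn.preconnected i i₀
    induction w with
    | nil => rfl
    | cons h p ih => exact (hkey _ _ h.2).trans ih
  -- column sums of L vanish
  have hcol : ∀ j, ∑ i, L i j = 0 := by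
    intro j
    rw [← Finset.add_sum_erase univ (fun i => L i j) (mem_univ j), hLdiag j]
    rw [Finset.sum_congr rfl fun i hi => hLoff i j (Finset.ne_of_mem_erase hi)]
    rw [Finset.sum_congr rfl (fun k hk => hAsymm j k)]
    simp
  have hgrad : ∀ i, gradient (f i) (z i) = -∑ j, L i j • lamstar j := by
    intro i
    have h := sub_eq_zero.mp (heq₁ i)
    rw [← neg_neg (gradient (f i) (z i)), h]
  have hgradsum : ∑ i, gradient (f i) (z i₀) = 0 := by
    calc ∑ i, gradient (f i) (z i₀) = ∑ i, gradient (f i) (z i) := by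
          exact Finset.sum_congr rfl fun i _ => by rw [hall i]
      _ = ∑ i, -∑ j, L i j • lamstar j := Finset.sum_congr rfl fun i _ => hgrad i
      _ = -∑ j, (∑ i, L i j) • lamstar j := by
          rw [Finset.sum_neg_distrib]
          congr 1
          rw [Finset.sum_comm]
          exact Finset.sum_congr rfl fun j _ => by rw [Finset.sum_smul]
      _ = 0 := by simp [hcol]
  refine ⟨z i₀, hall, hgradsum, ?_⟩
  intro y
  -- minimality via first-order condition for the convex function ∑ fᵢ
  have hgc : ConvexOn ℝ Set.univ (fun y => ∑ i, f i y) := by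
    have h : ConvexOn ℝ Set.univ (∑ i, f i) := by
      refine Finset.sum_induction f (fun g => ConvexOn ℝ Set.univ g)
        (fun a b ha hb => ha.add hb) (convexOn_const 0 convex_univ) ?_
      exact fun i _ => (hstrict i).convexOn
    have he : (∑ i, f i) = fun y => ∑ i, f i y := by
      funext y; simp
    rwa [he] at h
  have hgd : Differentiable ℝ (fun y => ∑ i, f i y) := by
    apply Differentiable.fun_sum
    exact fun i _ => hdiff i
  have hg0 : gradient (fun y => ∑ i, f i y) (z i₀) = 0 := by
    have hfd : fderiv ℝ (fun y => ∑ i, f i y) (z i₀) = ∑ i, fderiv ℝ (f i) (z i₀) :=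
      fderiv_fun_sum fun i _ => (hdiff i).differentiableAt
    unfold gradient
    rw [hfd, map_sum]
    exact hgradsum
  exact convex_min_of_gradient_eq_zero _ hgc hgd _ hg0 y
end

section
/- Suppose x : [0, ∞) → ℝⁿ and z : [0, ∞) → ℝˡ are differentiable, V(t) = ‖x(t)‖² + ‖z(t)‖² satisfies V̇(t) ≤ -ω‖x(t)‖² for all t, and there exist δ, k > 0 such that ∫_t^{t+δ} ‖x(τ)‖² dτ ≥ k(‖x(t)‖² + ‖z(t)‖²) for all t ≥ 0 (uniform complete observability bound). Then V(t + δ) - V(t) ≤ -ωk·(‖x(t)‖² + ‖z(t)‖²) · 2 / 2 = -2ωk·V(t)/2, i.e., V(t+δ) ≤ (1 - ωk)V(t) for all t ≥ 0, and hence V(t) → 0 exponentially (assuming ωk < 1). -/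
/-- If `V(t) = ‖x(t)‖² + ‖z(t)‖²` satisfies `V̇ ≤ -ω‖x‖²` and the uniform complete
observability bound `∫_t^{t+δ} ‖x(τ)‖² dτ ≥ k(‖x(t)‖² + ‖z(t)‖²)` holds, then
`V(t+δ) ≤ (1 - ωk)V(t)` for all `t ≥ 0`, and hence (with `ωk < 1`) `V` decays
exponentially: `V(t) ≤ (1 - ωk)^⌊t/δ⌋ V(0)`. -/
theorem stmt14 {n l : ℕ}
    (x : ℝ → EuclideanSpace ℝ (Fin n)) (z : ℝ → EuclideanSpace ℝ (Fin l))
    (hx : Differentiable ℝ x) (hz : Differentiable ℝ z)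
    (ω k δ : ℝ) (hω : 0 < ω) (hk : 0 < k) (hδ : 0 < δ) (hωk : ω * k < 1)
    (hVdot : ∀ t : ℝ, ∃ V' : ℝ,
      HasDerivAt (fun s => ‖x s‖ ^ 2 + ‖z s‖ ^ 2) V' t ∧ V' ≤ -ω * ‖x t‖ ^ 2)
    (hobs : ∀ t : ℝ, 0 ≤ t →
      k * (‖x t‖ ^ 2 + ‖z t‖ ^ 2) ≤ ∫ τ in t..(t + δ), ‖x τ‖ ^ 2) :
    (∀ t : ℝ, 0 ≤ t →
      ‖x (t + δ)‖ ^ 2 + ‖z (t + δ)‖ ^ 2 ≤ (1 - ω * k) * (‖x t‖ ^ 2 + ‖z t‖ ^ 2)) ∧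
    (∀ t : ℝ, 0 ≤ t →
      ‖x t‖ ^ 2 + ‖z t‖ ^ 2 ≤ (1 - ω * k) ^ (⌊t / δ⌋.toNat) * (‖x 0‖ ^ 2 + ‖z 0‖ ^ 2)) := by
  set V : ℝ → ℝ := fun s => ‖x s‖ ^ 2 + ‖z s‖ ^ 2 with hVdef
  have hcont : Continuous fun τ => ‖x τ‖ ^ 2 := (hx.continuous.norm).pow 2
  -- V is antitone
  have hVder : ∀ s, HasDerivAt V (deriv V s) s := by
    intro s
    obtain ⟨V', h1, _⟩ := hVdot s
    rw [h1.deriv]; exact h1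
  have hdV : ∀ s, deriv V s ≤ -ω * ‖x s‖ ^ 2 := by
    intro s
    obtain ⟨V', h1, h2⟩ := hVdot s
    rw [h1.deriv]; exact h2
  have hVanti : Antitone V := by
    apply antitone_of_deriv_nonpos (fun s => (hVder s).differentiableAt)
    intro s
    refine (hdV s).trans ?_
    have : 0 ≤ ω * ‖x s‖ ^ 2 := mul_nonneg hω.le (by positivity)
    linarith
  -- main step inequality
  have hstep : ∀ t : ℝ, 0 ≤ t → V (t + δ) ≤ (1 - ω * k) * V t := by
    intro t ht
    set F : ℝ → ℝ := fun s => ∫ τ in t..s, ‖x τ‖ ^ 2 with hFdef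
    have hFder : ∀ s, HasDerivAt F (‖x s‖ ^ 2) s := by
      intro s
      exact intervalIntegral.integral_hasDerivAt_right
        (hcont.intervalIntegrable t s)
        hcont.stronglyMeasurable.stronglyMeasurableAtFilter
        hcont.continuousAt
    set g : ℝ → ℝ := fun s => V s + ω * F s with hgdef
    have hgder : ∀ s, HasDerivAt g (deriv V s + ω * ‖x s‖ ^ 2) s := by
      intro s
      exact (hVder s).add ((hFder s).const_mul ω)
    have hganti : Antitone g := by
      apply antitone_of_deriv_nonpos (fun s => (hgder s).differentiableAt)
      intro s
      rw [(hgder s).deriv]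
      have := hdV s
      linarith
    have h1 : g (t + δ) ≤ g t := hganti (by linarith)
    have h2 : F t = 0 := intervalIntegral.integral_same
    have h3 : k * V t ≤ F (t + δ) := hobs t ht
    have h4 : V (t + δ) + ω * F (t + δ) ≤ V t := by
      have := h1
      simp only [hgdef, h2, mul_zero, add_zero] at this
      exact this
    nlinarith [mul_le_mul_of_nonneg_left h3 hω.le]
  constructor
  · exact hstep
  · intro t ht
    have h1ωk : 0 < 1 - ω * k := by linarith
    have hpow : ∀ m : ℕ, V (m * δ) ≤ (1 - ω * k) ^ m * V 0 := by
      intro m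
      induction m with
      | zero => simp
      | succ m ih =>
        have h1 : V (m * δ + δ) ≤ (1 - ω * k) * V (m * δ) :=
          hstep (m * δ) (by positivity)
        have h2 : ((m + 1 : ℕ) : ℝ) * δ = m * δ + δ := by push_cast; ring
        rw [h2, pow_succ]
        calc V (m * δ + δ) ≤ (1 - ω * k) * V (m * δ) := h1
          _ ≤ (1 - ω * k) * ((1 - ω * k) ^ m * V 0) :=
              mul_le_mul_of_nonneg_left ih h1ωk.le
          _ = (1 - ω * k) ^ m * (1 - ω * k) * V 0 := by ring
    have hm : (⌊t / δ⌋.toNat : ℝ) * δ ≤ t := by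
      have h1 : (⌊t / δ⌋ : ℝ) ≤ t / δ := Int.floor_le _
      have h2 : (0:ℤ) ≤ ⌊t / δ⌋ := Int.floor_nonneg.mpr (by positivity)
      have h3 : ((⌊t / δ⌋.toNat : ℤ) : ℝ) = (⌊t / δ⌋ : ℝ) := by
        rw [Int.toNat_of_nonneg h2]
      
      calc (⌊t / δ⌋.toNat : ℝ) * δ = (⌊t / δ⌋ : ℝ) * δ := by
            rw [← h3]; norm_cast
        _ ≤ (t / δ) * δ := by nlinarith
        _ = t := by field_simp
    exact (hVanti hm).trans (hpow _)
end
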